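/- Under Assumption B1, suppose K, Q ∈ ℝ^{d×d_e} satisfy the alignment property: K = U_K Λ_K V^⊤ and Q = U_Q Λ_Q V^⊤ with U_K, U_Q ∈ ℝ^{d×d} and V ∈ ℝ^{d_e×d_e} orthogonal, Λ_K, Λ_Q ∈ ℝ^{d×d_e} diagonal, and the columns of U_K, U_Q satisfying x_{i,opt(i)}/‖x_{i,opt(i)}‖_2 = u^k_{π(i)} and z_i/‖z_i‖_2 = u^q_{π(i)} for all i ∈ [n] for some injective π : [n] → [d]. Then for each i ∈ [n] and each pair (l, l') from the pairing of the non-optimal tokens in Assumption B1(iii): x_{il}^⊤ K Q^⊤ z_i = x_{il'}^⊤ K Q^⊤ z_i, and hence S(X_i K Q^⊤ z_i)_l = S(X_i K Q^⊤ z_i)_{l'}. -/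

import Mathlib

open Real Filter Finset

noncomputable section

namespace AttnGF

/-- Softmax of a vector in `ℝ^L`. -/
def S {L : ℕ} (u : Fin L → ℝ) (l : Fin L) : ℝ := Real.exp (u l) / ∑ j, Real.exp (u j)

/-- Euclidean norm of a vector. -/
def l2 {d : ℕ} (x : Fin d → ℝ) : ℝ := Real.sqrt (∑ j, x j ^ 2)

/-- ℓ1 norm of a vector. -/
def l1 {d : ℕ} (x : Fin d → ℝ) : ℝ := ∑ j, |x j|

variable {n L d de : ℕ}

/-- Token scores γ_{il} = y_i v^⊤ x_{il}. -/
def gam (X : Fin n → Fin L → Fin d → ℝ) (y : Fin n → ℝ) (v : Fin d → ℝ)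
    (i : Fin n) (l : Fin L) : ℝ := y i * ∑ j, v j * X i l j

/-- g_i(β) = X_i (β ⊙ z_i) for the diagonal attention model. -/
def gD (X : Fin n → Fin L → Fin d → ℝ) (z : Fin n → Fin d → ℝ) (i : Fin n)
    (β : Fin d → ℝ) (l : Fin L) : ℝ := ∑ j, X i l j * (β j * z i j)

/-- Empirical exponential loss for the diagonal attention model. -/
def lossD (X : Fin n → Fin L → Fin d → ℝ) (z : Fin n → Fin d → ℝ)
    (y : Fin n → ℝ) (v : Fin d → ℝ) (β : Fin d → ℝ) : ℝ :=
  (1 / (n : ℝ)) * ∑ i, Real.exp (-(∑ l, gam X y v i l * S (gD X z i β) l))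

/-- Constraint vectors B_{il} = z_i ⊙ (x_{i,opt(i)} − x_{il}). -/
def Bv (X : Fin n → Fin L → Fin d → ℝ) (z : Fin n → Fin d → ℝ)
    (opt : Fin n → Fin L) (i : Fin n) (l : Fin L) (j : Fin d) : ℝ :=
  z i j * (X i (opt i) j - X i l j)

/-- (Σ(u) γ)_l where Σ(u) = Diag(S(u)) − S(u) S(u)^⊤. -/
def SigMul {L : ℕ} (u γv : Fin L → ℝ) (l : Fin L) : ℝ :=
  S u l * γv l - S u l * ∑ j, S u j * γv j

/-- j-th component of the gradient (partial derivative) of f at x. -/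
def pD {d : ℕ} (f : (Fin d → ℝ) → ℝ) (x : Fin d → ℝ) (j : Fin d) : ℝ :=
  fderiv ℝ f x (Pi.single j 1)

/-- Assumption A1. -/
def A1 (X : Fin n → Fin L → Fin d → ℝ) (y : Fin n → ℝ) (v : Fin d → ℝ)
    (opt : Fin n → Fin L) (nopt : Fin n → ℝ) : Prop :=
  ∀ i : Fin n, ∀ l : Fin L, l ≠ opt i →
    gam X y v i l < gam X y v i (opt i) ∧ gam X y v i l = nopt i

/-- Feasibility for the ℓ1-SVM. -/
def Feas (X : Fin n → Fin L → Fin d → ℝ) (z : Fin n → Fin d → ℝ)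
    (opt : Fin n → Fin L) (βf : Fin d → ℝ) : Prop :=
  ∀ i : Fin n, ∀ l : Fin L, l ≠ opt i → 1 ≤ ∑ j, βf j * Bv X z opt i l j

/-- Reparametrized gradient flow on (w₊, w₋). -/
def Flow (X : Fin n → Fin L → Fin d → ℝ) (z : Fin n → Fin d → ℝ)
    (y : Fin n → ℝ) (v : Fin d → ℝ) (wp wm : ℝ → Fin d → ℝ) : Prop :=
  ∀ t : ℝ, 0 ≤ t → ∀ j : Fin d,
    HasDerivAt (fun s => wp s j)
      (-(pD (fun u => lossD X z y v (fun k => (u k ^ 2 - wm t k ^ 2) / 2)) (wp t) j)) t ∧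
    HasDerivAt (fun s => wm s j)
      (-(pD (fun u => lossD X z y v (fun k => (wp t k ^ 2 - u k ^ 2) / 2)) (wm t) j)) t

/-- β(t) = (w₊(t)^{⊙2} − w₋(t)^{⊙2})/2. -/
def bCurve (wp wm : ℝ → Fin d → ℝ) (t : ℝ) (j : Fin d) : ℝ :=
  (wp t j ^ 2 - wm t j ^ 2) / 2

/-- Assumption A2 (initial loss bound). -/
def A2 (X : Fin n → Fin L → Fin d → ℝ) (z : Fin n → Fin d → ℝ)
    (y : Fin n → ℝ) (v : Fin d → ℝ) (opt : Fin n → Fin L) (nopt : Fin n → ℝ)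
    (β0 : Fin d → ℝ) : Prop :=
  ∀ jj : Fin n, lossD X z y v β0 ≤
    (Real.exp (-(nopt jj)) +
      ∑ i ∈ Finset.univ.erase jj, Real.exp (-(gam X y v i (opt i)))) / (n : ℝ)

/-- Margin μ(β) = min_{i, l ≠ opt(i)} β^⊤ B_{il}. -/
def margin (X : Fin n → Fin L → Fin d → ℝ) (z : Fin n → Fin d → ℝ)
    (opt : Fin n → Fin L) (β : Fin d → ℝ) : ℝ :=
  sInf {m : ℝ | ∃ i : Fin n, ∃ l : Fin L, l ≠ opt i ∧ m = ∑ j, β j * Bv X z opt i l j}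

/-- φ_{il}(t). -/
def phi (X : Fin n → Fin L → Fin d → ℝ) (z : Fin n → Fin d → ℝ)
    (y : Fin n → ℝ) (v : Fin d → ℝ) (β : ℝ → Fin d → ℝ) (i : Fin n) (l : Fin L)
    (t : ℝ) : ℝ :=
  -(2 / (n : ℝ)) * ∫ τ in (0:ℝ)..t,
    Real.exp (-(∑ l', gam X y v i l' * S (gD X z i (β τ)) l')) *
      SigMul (gD X z i (β τ)) (gam X y v i) l

/-- Dual variables λ_{il}(t) = φ_{il}(t) / ln μ(β(t)). -/
def lam (X : Fin n → Fin L → Fin d → ℝ) (z : Fin n → Fin d → ℝ)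
    (y : Fin n → ℝ) (v : Fin d → ℝ) (opt : Fin n → Fin L) (β : ℝ → Fin d → ℝ)
    (i : Fin n) (l : Fin L) (t : ℝ) : ℝ :=
  (1 / Real.log (margin X z opt (β t))) * phi X z y v β i l t

/-- g_i(K,Q) = X_i K Q^⊤ z_i for the full attention model. -/
def gM (X : Fin n → Fin L → Fin d → ℝ) (z : Fin n → Fin d → ℝ) (i : Fin n)
    (K Q : Fin d → Fin de → ℝ) (l : Fin L) : ℝ :=
  ∑ a, ∑ b, ∑ c, X i l a * K a b * Q c b * z i c

/-- Empirical exponential loss for the full attention model. -/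
def lossM (X : Fin n → Fin L → Fin d → ℝ) (z : Fin n → Fin d → ℝ)
    (y : Fin n → ℝ) (v : Fin d → ℝ) (K Q : Fin d → Fin de → ℝ) : ℝ :=
  (1 / (n : ℝ)) * ∑ i, Real.exp (-(∑ l, gam X y v i l * S (gM X z i K Q) l))

/-- Partial derivative of f with respect to the (a,b) entry of a matrix. -/
def pDM {d de : ℕ} (f : (Fin d → Fin de → ℝ) → ℝ) (M : Fin d → Fin de → ℝ)
    (a : Fin d) (b : Fin de) : ℝ :=
  fderiv ℝ f M (Pi.single a (Pi.single b 1))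

/-- Gradient flow on the key and query matrices. -/
def MFlow (X : Fin n → Fin L → Fin d → ℝ) (z : Fin n → Fin d → ℝ)
    (y : Fin n → ℝ) (v : Fin d → ℝ) (K Q : ℝ → Fin d → Fin de → ℝ) : Prop :=
  ∀ t : ℝ, 0 ≤ t → ∀ (a : Fin d) (b : Fin de),
    HasDerivAt (fun s => K s a b) (-(pDM (fun M => lossM X z y v M (Q t)) (K t) a b)) t ∧
    HasDerivAt (fun s => Q s a b) (-(pDM (fun M => lossM X z y v (K t) M) (Q t) a b)) t

/-- A rectangular matrix is diagonal: zero off the main diagonal. -/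
def RectDiag {d de : ℕ} (M : Fin d → Fin de → ℝ) : Prop :=
  ∀ (a : Fin d) (b : Fin de), (a : ℕ) ≠ (b : ℕ) → M a b = 0

/-- Orthogonality: U^⊤ U = 1. -/
def Orth {d : ℕ} (U : Fin d → Fin d → ℝ) : Prop :=
  ∀ j j' : Fin d, ∑ a, U a j * U a j' = (if j = j' then (1:ℝ) else 0)

/-- Assumption B1, with the pairing of non-optimal tokens given by the involution σ. -/
def B1 (X : Fin n → Fin L → Fin d → ℝ) (z : Fin n → Fin d → ℝ)
    (opt : Fin n → Fin L) (σ : Fin n → Fin L → Fin L) : Prop :=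
  (∀ i j : Fin n, i ≠ j →
    (∑ a, X i (opt i) a * X j (opt j) a = 0) ∧ (∑ a, z i a * z j a = 0)) ∧
  (∀ i, |∑ a, X i (opt i) a * z i a| = l2 (X i (opt i)) * l2 (z i)) ∧
  (∀ i, ∀ l, l ≠ opt i → σ i l ≠ opt i ∧ σ i l ≠ l ∧ σ i (σ i l) = l ∧
    ∃ c : ℝ, -1 ≤ c ∧ c < 1 ∧
      (∑ a, X i (opt i) a * (X i l a - X i (σ i l) a)) = 0 ∧
      (∀ a, X i l a + X i (σ i l) a = 2 * c * X i (opt i) a))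

/-- Rotated constraint vectors B̃_{il}. -/
def Btil (X : Fin n → Fin L → Fin d → ℝ) (z : Fin n → Fin d → ℝ)
    (opt : Fin n → Fin L) (pim : Fin n → Fin d) (i : Fin n) (l : Fin L) (j : Fin d) : ℝ :=
  Real.sign (∑ a, X i (opt i) a * z i a) * (∑ a, (X i (opt i) a - X i l a) * z i a) *
    (if j = pim i then 1 else 0)

/-- Margin with respect to the rotated constraints. -/
def marginB (X : Fin n → Fin L → Fin d → ℝ) (z : Fin n → Fin d → ℝ)
    (opt : Fin n → Fin L) (pim : Fin n → Fin d) (β : Fin d → ℝ) : ℝ :=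
  sInf {m : ℝ | ∃ i : Fin n, ∃ l : Fin L, l ≠ opt i ∧ m = ∑ j, β j * Btil X z opt pim i l j}

/-- Margin for a combined attention weight matrix. -/
def marginM (X : Fin n → Fin L → Fin d → ℝ) (z : Fin n → Fin d → ℝ)
    (opt : Fin n → Fin L) (W : Fin d → Fin d → ℝ) : ℝ :=
  sInf {m : ℝ | ∃ i : Fin n, ∃ l : Fin L, l ≠ opt i ∧
    m = ∑ a, ∑ c, (X i (opt i) a - X i l a) * W a c * z i c}

/-- Nuclear norm ‖W‖_* = trace((W^⊤W)^{1/2}). -/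
def nuclear {d : ℕ} (W : Matrix (Fin d) (Fin d) ℝ) : ℝ :=
  ((Matrix.posSemidef_conjTranspose_mul_self W).1.eigenvectorUnitary.1 *
    Matrix.diagonal (fun i => Real.sqrt
      ((Matrix.posSemidef_conjTranspose_mul_self W).1.eigenvalues i)) *
    (star (Matrix.posSemidef_conjTranspose_mul_self W).1.eigenvectorUnitary :
      Matrix (Fin d) (Fin d) ℝ)).trace

end AttnGF

namespace AttnGF

/-- under alignment, paired non-optimal tokens get equal attention scores
and equal softmax probabilities. -/
theorem statement17 {n L d de : ℕ}
    (X : Fin n → Fin L → Fin d → ℝ) (z : Fin n → Fin d → ℝ)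
    (opt : Fin n → Fin L)
    (σ : Fin n → Fin L → Fin L) (hB1 : B1 X z opt σ)
    (K Q : Fin d → Fin de → ℝ)
    (UK UQ : Fin d → Fin d → ℝ) (V : Fin de → Fin de → ℝ)
    (hUK : Orth UK) (hUQ : Orth UQ) (hV : Orth V)
    (pim : Fin n → Fin d) (hpim : Function.Injective pim)
    (hcolK : ∀ (i : Fin n) (a : Fin d),
      X i (opt i) a / l2 (X i (opt i)) = UK a (pim i))
    (hcolQ : ∀ (i : Fin n) (a : Fin d),
      z i a / l2 (z i) = UQ a (pim i))
    (ΛK ΛQ : Fin d → Fin de → ℝ) (hΛK : RectDiag ΛK) (hΛQ : RectDiag ΛQ)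
    (hK : ∀ (a : Fin d) (b : Fin de),
      K a b = ∑ j, ∑ m, UK a j * ΛK j m * V b m)
    (hQ : ∀ (a : Fin d) (b : Fin de),
      Q a b = ∑ j, ∑ m, UQ a j * ΛQ j m * V b m) :
    ∀ i : Fin n, ∀ l : Fin L, l ≠ opt i →
      gM X z i K Q l = gM X z i K Q (σ i l) ∧
      S (gM X z i K Q) l = S (gM X z i K Q) (σ i l) := by
  intro i l hl
  obtain ⟨hortho, habs, hpair⟩ := hB1
  obtain ⟨h1, h2, h3, c, hc1, hc2, horth, hsum⟩ := hpair i l hl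
  -- nonzero norms
  have hzne : l2 (z i) ≠ 0 := by
    intro h
    have h0 : ∑ a, UQ a (pim i) * UQ a (pim i) = 0 := by
      apply Finset.sum_eq_zero; intro a _
      rw [← hcolQ i a, h, div_zero, mul_zero]
    have h1' := hUQ (pim i) (pim i)
    simp [h0] at h1'
  have hxne : l2 (X i (opt i)) ≠ 0 := by
    intro h
    have h0 : ∑ a, UK a (pim i) * UK a (pim i) = 0 := by
      apply Finset.sum_eq_zero; intro a _
      rw [← hcolK i a, h, div_zero, mul_zero]
    have h1' := hUK (pim i) (pim i)
    simp [h0] at h1'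
  have hzc : ∀ a, z i a = l2 (z i) * UQ a (pim i) := by
    intro a; rw [← hcolQ i a]; field_simp
  -- Lemma A: column orthogonality against z
  have lemA : ∀ j' : Fin d, ∑ a, UQ a j' * z i a
      = l2 (z i) * (if j' = pim i then (1:ℝ) else 0) := by
    intro j'
    calc ∑ a, UQ a j' * z i a
        = l2 (z i) * ∑ a, UQ a j' * UQ a (pim i) := by
          rw [Finset.mul_sum]; apply Finset.sum_congr rfl; intro a _
          rw [hzc a]; ring
      _ = l2 (z i) * (if j' = pim i then (1:ℝ) else 0) := by rw [hUQ j' (pim i)]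
  -- Lemma Q: ∑ c, Q c b * z i c
  have lemQ : ∀ b : Fin de, ∑ cc, Q cc b * z i cc
      = l2 (z i) * ∑ m', ΛQ (pim i) m' * V b m' := by
    intro b
    calc ∑ cc, Q cc b * z i cc
        = ∑ cc, ∑ j', ∑ m', (ΛQ j' m' * V b m') * (UQ cc j' * z i cc) := by
          apply Finset.sum_congr rfl; intro cc _
          rw [hQ cc b, Finset.sum_mul]
          apply Finset.sum_congr rfl; intro j' _
          rw [Finset.sum_mul]
          apply Finset.sum_congr rfl; intro m' _; ring
      _ = ∑ j', ∑ m', (ΛQ j' m' * V b m') * (∑ cc, UQ cc j' * z i cc) := by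
          rw [Finset.sum_comm]
          apply Finset.sum_congr rfl; intro j' _
          rw [Finset.sum_comm]
          apply Finset.sum_congr rfl; intro m' _
          rw [Finset.mul_sum]
      _ = ∑ j', ∑ m', (ΛQ j' m' * V b m') *
            (l2 (z i) * (if j' = pim i then (1:ℝ) else 0)) := by
          apply Finset.sum_congr rfl; intro j' _
          apply Finset.sum_congr rfl; intro m' _
          rw [lemA j']
      _ = l2 (z i) * ∑ m', ΛQ (pim i) m' * V b m' := by
          rw [Finset.sum_eq_single (pim i)]
          · simp [Finset.mul_sum]; apply Finset.sum_congr rfl; intro m' _; ring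
          · intro j' _ hj'; simp [hj']
          · intro h; exact absurd (Finset.mem_univ _) h
  -- Lemma B: ∑ b, K a b * V b m'
  have lemB : ∀ (a : Fin d) (m' : Fin de), ∑ b, K a b * V b m'
      = ∑ j, UK a j * ΛK j m' := by
    intro a m'
    calc ∑ b, K a b * V b m'
        = ∑ b, ∑ j, ∑ m, (UK a j * ΛK j m) * (V b m * V b m') := by
          apply Finset.sum_congr rfl; intro b _
          rw [hK a b, Finset.sum_mul]
          apply Finset.sum_congr rfl; intro j _
          rw [Finset.sum_mul]
          apply Finset.sum_congr rfl; intro m _; ring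
      _ = ∑ j, ∑ m, (UK a j * ΛK j m) * (∑ b, V b m * V b m') := by
          rw [Finset.sum_comm]
          apply Finset.sum_congr rfl; intro j _
          rw [Finset.sum_comm]
          apply Finset.sum_congr rfl; intro m _
          rw [Finset.mul_sum]
      _ = ∑ j, ∑ m, (UK a j * ΛK j m) * (if m = m' then (1:ℝ) else 0) := by
          apply Finset.sum_congr rfl; intro j _
          apply Finset.sum_congr rfl; intro m _
          rw [hV m m']
      _ = ∑ j, UK a j * ΛK j m' := by
          apply Finset.sum_congr rfl; intro j _
          rw [Finset.sum_eq_single m']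
          · simp
          · intro m _ hm; simp [hm]
          · intro h; exact absurd (Finset.mem_univ _) h
  -- key lemma
  have key : ∀ w : Fin d → ℝ, (∑ a, X i (opt i) a * w a) = 0 →
      (∑ a, ∑ b, ∑ cc, w a * K a b * Q cc b * z i cc) = 0 := by
    intro w hw
    have hwUK : ∑ a, w a * UK a (pim i) = 0 := by
      have : ∑ a, w a * UK a (pim i)
          = (∑ a, X i (opt i) a * w a) / l2 (X i (opt i)) := by
        rw [Finset.sum_div]
        apply Finset.sum_congr rfl; intro a _
        rw [← hcolK i a]; ring
      rw [this, hw, zero_div]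
    calc ∑ a, ∑ b, ∑ cc, w a * K a b * Q cc b * z i cc
        = ∑ a, ∑ b, (w a * K a b) * (∑ cc, Q cc b * z i cc) := by
          apply Finset.sum_congr rfl; intro a _
          apply Finset.sum_congr rfl; intro b _
          rw [Finset.mul_sum]
          apply Finset.sum_congr rfl; intro cc _; ring
      _ = ∑ a, ∑ b, (w a * K a b) *
            (l2 (z i) * ∑ m', ΛQ (pim i) m' * V b m') := by
          apply Finset.sum_congr rfl; intro a _
          apply Finset.sum_congr rfl; intro b _
          rw [lemQ b]
      _ = l2 (z i) * ∑ a, w a * ∑ m', ΛQ (pim i) m' * (∑ b, K a b * V b m') := by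
          rw [Finset.mul_sum]
          apply Finset.sum_congr rfl; intro a _
          simp only [Finset.mul_sum]
          rw [Finset.sum_comm]
          apply Finset.sum_congr rfl; intro m' _
          apply Finset.sum_congr rfl; intro b _
          ring
      _ = l2 (z i) * ∑ a, w a * ∑ m', ΛQ (pim i) m' * (∑ j, UK a j * ΛK j m') := by
          congr 1
          apply Finset.sum_congr rfl; intro a _
          congr 1
          apply Finset.sum_congr rfl; intro m' _
          rw [lemB a m']
      _ = l2 (z i) * ∑ m', ΛQ (pim i) m' *
            ∑ a, w a * (∑ j, UK a j * ΛK j m') := by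
          congr 1
          simp only [Finset.mul_sum]
          rw [Finset.sum_comm]
          apply Finset.sum_congr rfl; intro m' _
          apply Finset.sum_congr rfl; intro a _
          apply Finset.sum_congr rfl; intro j _
          ring
      _ = 0 := by
          rw [mul_eq_zero]; right
          apply Finset.sum_eq_zero; intro m' _
          by_cases hm : ((pim i : ℕ) = (m' : ℕ))
          · -- only j with (j:ℕ) = m' contributes, i.e. j = pim i
            have : ∑ a, w a * (∑ j, UK a j * ΛK j m')
                = ∑ a, w a * (UK a (pim i) * ΛK (pim i) m') := by
              apply Finset.sum_congr rfl; intro a _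
              congr 1
              rw [Finset.sum_eq_single (pim i)]
              · intro j _ hj
                have : (j : ℕ) ≠ (m' : ℕ) := by
                  intro h; apply hj; apply Fin.ext; omega
                rw [hΛK j m' this, mul_zero]
              · intro h; exact absurd (Finset.mem_univ _) h
            rw [this]
            have : ∑ a, w a * (UK a (pim i) * ΛK (pim i) m')
                = (∑ a, w a * UK a (pim i)) * ΛK (pim i) m' := by
              rw [Finset.sum_mul]
              apply Finset.sum_congr rfl; intro a _; ring
            rw [this, hwUK, zero_mul, mul_zero]
          · rw [hΛQ (pim i) m' hm, zero_mul]
  -- the difference of scores is zero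
  have hdiff : gM X z i K Q l = gM X z i K Q (σ i l) := by
    have hw : (∑ a, X i (opt i) a * (X i l a - X i (σ i l) a)) = 0 := horth
    have := key (fun a => X i l a - X i (σ i l) a) hw
    have hexp : (∑ a, ∑ b, ∑ cc,
        (X i l a - X i (σ i l) a) * K a b * Q cc b * z i cc)
        = gM X z i K Q l - gM X z i K Q (σ i l) := by
      unfold gM
      rw [← Finset.sum_sub_distrib]
      apply Finset.sum_congr rfl; intro a _
      rw [← Finset.sum_sub_distrib]
      apply Finset.sum_congr rfl; intro b _
      rw [← Finset.sum_sub_distrib]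
      apply Finset.sum_congr rfl; intro cc _; ring
    rw [hexp] at this
    linarith
  refine ⟨hdiff, ?_⟩
  unfold S
  rw [hdiff]


end AttnGF
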